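/- Let N be a positive integer and f : ZMod N → ℂ with |f(n)| ≤ 1 for all n. Define ‖f‖_{U²}⁴ = (1/N³) ∑_{x00+x11=x01+x10} f(x00) f(x01) conj(f(x10)) conj(f(x11)) and f̂(θ) = (1/N) ∑_n f(n) e(-2πi n θ / N). If ‖f‖_{U²} ≥ δ for some δ > 0, then there exists θ ∈ ZMod N with |f̂(θ)| ≥ δ². -/

import Mathlib

open Finset Complex

namespace Stmt3Aux

variable {N : ℕ} [NeZero N]

lemma conj_e (x : ZMod N) :
    (starRingEnd ℂ) (ZMod.stdAddChar x) = ZMod.stdAddChar (-x) := by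
  have habs : ‖ZMod.stdAddChar x‖ = 1 := by
    rw [ZMod.stdAddChar_apply]; exact Circle.norm_coe _
  have h1 : ZMod.stdAddChar x * ZMod.stdAddChar (-x) = 1 := by
    rw [← AddChar.map_add_eq_mul]; simp
  have h2 : (starRingEnd ℂ) (ZMod.stdAddChar x) * ZMod.stdAddChar x = 1 := by
    rw [mul_comm, Complex.mul_conj, Complex.normSq_eq_norm_sq, habs]; norm_num
  calc (starRingEnd ℂ) (ZMod.stdAddChar x)
      = (starRingEnd ℂ) (ZMod.stdAddChar x) *
        (ZMod.stdAddChar x * ZMod.stdAddChar (-x)) := by rw [h1, mul_one]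
    _ = ((starRingEnd ℂ) (ZMod.stdAddChar x) * ZMod.stdAddChar x) *
        ZMod.stdAddChar (-x) := by ring
    _ = ZMod.stdAddChar (-x) := by rw [h2, one_mul]

lemma sum_e (t : ZMod N) :
    ∑ θ : ZMod N, ZMod.stdAddChar (t * θ) = if t = 0 then (N : ℂ) else 0 := by
  split_ifs with h
  · simp only [h, zero_mul, AddChar.map_zero_eq_one, sum_const, card_univ,
      ZMod.card, nsmul_eq_mul, mul_one]
  · exact AddChar.sum_eq_zero_of_ne_one (ZMod.isPrimitive_stdAddChar N h)

/-- exp rewrite -/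
lemma exp_eq (n θ : ZMod N) :
    Complex.exp (-(2 * Real.pi * Complex.I * (n.val : ℂ) * (θ.val : ℂ) / N)) =
      ZMod.stdAddChar (-(n * θ)) := by
  have : (-(n * θ) : ZMod N) = ((-(n.val * θ.val : ℤ) : ℤ) : ZMod N) := by
    push_cast
    rw [ZMod.natCast_val, ZMod.natCast_val, ZMod.cast_id, ZMod.cast_id]
  rw [this, ZMod.stdAddChar_coe]
  congr 1
  push_cast
  ring

noncomputable def g (f : ZMod N → ℂ) (θ : ZMod N) : ℂ :=
  ∑ n : ZMod N, f n * ZMod.stdAddChar (-(n * θ))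

variable (f : ZMod N → ℂ)

lemma g_neg (θ : ZMod N) : g f (-θ) = ∑ a : ZMod N, f a * ZMod.stdAddChar (a * θ) := by
  simp [g, mul_neg]

lemma conj_g (θ : ZMod N) :
    (starRingEnd ℂ) (g f θ) = ∑ n : ZMod N, (starRingEnd ℂ) (f n) * ZMod.stdAddChar (n * θ) := by
  rw [g, map_sum]
  exact Finset.sum_congr rfl fun n _ => by rw [map_mul, conj_e, neg_neg]

lemma conj_g_neg (θ : ZMod N) :
    (starRingEnd ℂ) (g f (-θ)) =
      ∑ n : ZMod N, (starRingEnd ℂ) (f n) * ZMod.stdAddChar (-(n * θ)) := by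
  rw [conj_g]
  exact Finset.sum_congr rfl fun n _ => by rw [mul_neg]

lemma key (θ : ZMod N) :
    ∑ x : ZMod N × ZMod N × ZMod N × ZMod N,
        (f x.1 * f x.2.1 * (starRingEnd ℂ) (f x.2.2.1) * (starRingEnd ℂ) (f x.2.2.2)) *
          ZMod.stdAddChar ((x.1 + x.2.2.2 - x.2.1 - x.2.2.1) * θ) =
      (starRingEnd ℂ) (g f θ) * (starRingEnd ℂ) (g f (-θ)) * g f θ * g f (-θ) := by
  rw [conj_g_neg, conj_g, g_neg, g]
  simp only [Fintype.sum_prod_type, Finset.sum_mul, Finset.mul_sum]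
  refine Finset.sum_congr rfl fun a _ => Finset.sum_congr rfl fun b _ =>
    Finset.sum_congr rfl fun c _ => Finset.sum_congr rfl fun d _ => ?_
  have hc : ZMod.stdAddChar ((a + d - b - c) * θ) =
      ZMod.stdAddChar (a * θ) * ZMod.stdAddChar (-(b * θ)) *
        ZMod.stdAddChar (-(c * θ)) * ZMod.stdAddChar (d * θ) := by
    rw [← AddChar.map_add_eq_mul, ← AddChar.map_add_eq_mul, ← AddChar.map_add_eq_mul]
    congr 1
    ring
  rw [hc]
  ring

lemma claim1 :
    (∑ x ∈ Finset.univ.filter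
        (fun x : ZMod N × ZMod N × ZMod N × ZMod N => x.1 + x.2.2.2 = x.2.1 + x.2.2.1),
      f x.1 * f x.2.1 * (starRingEnd ℂ) (f x.2.2.1) * (starRingEnd ℂ) (f x.2.2.2)) =
    (N : ℂ)⁻¹ * ∑ θ : ZMod N,
      (starRingEnd ℂ) (g f θ) * (starRingEnd ℂ) (g f (-θ)) * g f θ * g f (-θ) := by
  have hN : (N : ℂ) ≠ 0 := Nat.cast_ne_zero.mpr (NeZero.ne N)
  rw [Finset.sum_filter]
  have hpt : ∀ x : ZMod N × ZMod N × ZMod N × ZMod N,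
      (if x.1 + x.2.2.2 = x.2.1 + x.2.2.1 then
          f x.1 * f x.2.1 * (starRingEnd ℂ) (f x.2.2.1) * (starRingEnd ℂ) (f x.2.2.2) else 0) =
        (N : ℂ)⁻¹ * ∑ θ : ZMod N,
          (f x.1 * f x.2.1 * (starRingEnd ℂ) (f x.2.2.1) * (starRingEnd ℂ) (f x.2.2.2)) *
            ZMod.stdAddChar ((x.1 + x.2.2.2 - x.2.1 - x.2.2.1) * θ) := by
    intro x
    rw [← Finset.mul_sum, sum_e]
    have hiff : (x.1 + x.2.2.2 - x.2.1 - x.2.2.1 = 0) ↔ (x.1 + x.2.2.2 = x.2.1 + x.2.2.1) := by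
      constructor <;> intro h <;> linear_combination h
    by_cases h : x.1 + x.2.2.2 = x.2.1 + x.2.2.1
    · rw [if_pos h, if_pos (hiff.mpr h)]
      field_simp
    · rw [if_neg h, if_neg (fun h' => h (hiff.mp h')), mul_zero, mul_zero]
  calc (∑ x : ZMod N × ZMod N × ZMod N × ZMod N,
          if x.1 + x.2.2.2 = x.2.1 + x.2.2.1 then
            f x.1 * f x.2.1 * (starRingEnd ℂ) (f x.2.2.1) * (starRingEnd ℂ) (f x.2.2.2) else 0)
      = ∑ x : ZMod N × ZMod N × ZMod N × ZMod N, (N : ℂ)⁻¹ * ∑ θ : ZMod N,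
          (f x.1 * f x.2.1 * (starRingEnd ℂ) (f x.2.2.1) * (starRingEnd ℂ) (f x.2.2.2)) *
            ZMod.stdAddChar ((x.1 + x.2.2.2 - x.2.1 - x.2.2.1) * θ) :=
        Finset.sum_congr rfl fun x _ => hpt x
    _ = (N : ℂ)⁻¹ * ∑ x : ZMod N × ZMod N × ZMod N × ZMod N, ∑ θ : ZMod N,
          (f x.1 * f x.2.1 * (starRingEnd ℂ) (f x.2.2.1) * (starRingEnd ℂ) (f x.2.2.2)) *
            ZMod.stdAddChar ((x.1 + x.2.2.2 - x.2.1 - x.2.2.1) * θ) := by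
        rw [Finset.mul_sum]
    _ = (N : ℂ)⁻¹ * ∑ θ : ZMod N, ∑ x : ZMod N × ZMod N × ZMod N × ZMod N,
          (f x.1 * f x.2.1 * (starRingEnd ℂ) (f x.2.2.1) * (starRingEnd ℂ) (f x.2.2.2)) *
            ZMod.stdAddChar ((x.1 + x.2.2.2 - x.2.1 - x.2.2.1) * θ) := by
        rw [Finset.sum_comm]
    _ = (N : ℂ)⁻¹ * ∑ θ : ZMod N,
          (starRingEnd ℂ) (g f θ) * (starRingEnd ℂ) (g f (-θ)) * g f θ * g f (-θ) := by
        rw [Finset.sum_congr rfl fun θ _ => key f θ]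

lemma parseval :
    ∑ θ : ZMod N, g f θ * (starRingEnd ℂ) (g f θ) =
      (N : ℂ) * ∑ n : ZMod N, f n * (starRingEnd ℂ) (f n) := by
  have h1 : ∀ θ : ZMod N, g f θ * (starRingEnd ℂ) (g f θ) =
      ∑ n : ZMod N, ∑ m : ZMod N,
        (f n * (starRingEnd ℂ) (f m)) * ZMod.stdAddChar ((m - n) * θ) := by
    intro θ
    rw [conj_g, g, Finset.sum_mul_sum]
    refine Finset.sum_congr rfl fun n _ => Finset.sum_congr rfl fun m _ => ?_
    have hc : ZMod.stdAddChar (-(n * θ)) * ZMod.stdAddChar (m * θ) =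
        ZMod.stdAddChar ((m - n) * θ) := by
      rw [← AddChar.map_add_eq_mul]
      congr 1
      ring
    rw [← hc]
    ring
  calc ∑ θ : ZMod N, g f θ * (starRingEnd ℂ) (g f θ)
      = ∑ θ : ZMod N, ∑ n : ZMod N, ∑ m : ZMod N,
          (f n * (starRingEnd ℂ) (f m)) * ZMod.stdAddChar ((m - n) * θ) :=
        Finset.sum_congr rfl fun θ _ => h1 θ
    _ = ∑ n : ZMod N, ∑ m : ZMod N, ∑ θ : ZMod N,
          (f n * (starRingEnd ℂ) (f m)) * ZMod.stdAddChar ((m - n) * θ) := by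
        rw [Finset.sum_comm]
        exact Finset.sum_congr rfl fun n _ => Finset.sum_comm
    _ = ∑ n : ZMod N, ∑ m : ZMod N,
          (f n * (starRingEnd ℂ) (f m)) * (if m - n = 0 then (N : ℂ) else 0) := by
        refine Finset.sum_congr rfl fun n _ => Finset.sum_congr rfl fun m _ => ?_
        rw [← Finset.mul_sum, sum_e]
    _ = ∑ n : ZMod N, (f n * (starRingEnd ℂ) (f n)) * (N : ℂ) := by
        refine Finset.sum_congr rfl fun n _ => ?_
        simp only [sub_eq_zero, mul_ite, mul_zero]
        rw [Finset.sum_ite_eq' Finset.univ n (fun m => f n * (starRingEnd ℂ) (f m) * (N : ℂ))]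
        simp
    _ = (N : ℂ) * ∑ n : ZMod N, f n * (starRingEnd ℂ) (f n) := by
        rw [Finset.mul_sum]
        exact Finset.sum_congr rfl fun n _ => by ring

end Stmt3Aux

theorem stmt_3 (N : ℕ) [NeZero N] (f : ZMod N → ℂ) (hf : ∀ n, ‖f n‖ ≤ 1)
    (F : ZMod N → ℂ)
    (hF : ∀ θ : ZMod N, F θ =
      (N : ℂ)⁻¹ * ∑ n : ZMod N,
        f n * Complex.exp (-(2 * Real.pi * Complex.I * (n.val : ℂ) * (θ.val : ℂ) / N)))
    (δ : ℝ) (hδ : 0 < δ)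
    (hU : δ ^ 4 ≤ ‖((N : ℂ) ^ 3)⁻¹ *
      ∑ x ∈ Finset.univ.filter
          (fun x : ZMod N × ZMod N × ZMod N × ZMod N => x.1 + x.2.2.2 = x.2.1 + x.2.2.1),
        f x.1 * f x.2.1 * (starRingEnd ℂ) (f x.2.2.1) * (starRingEnd ℂ) (f x.2.2.2)‖) :
    ∃ θ : ZMod N, δ ^ 2 ≤ ‖F θ‖ := by
  classical
  have hNpos : 0 < (N : ℝ) := by exact_mod_cast Nat.pos_of_ne_zero (NeZero.ne N)
  set G := Stmt3Aux.g f with hGdef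
  have hFg : ∀ θ, F θ = (N : ℂ)⁻¹ * G θ := by
    intro θ
    rw [hF θ, hGdef, Stmt3Aux.g]
    congr 1
    exact Finset.sum_congr rfl fun n _ => by rw [Stmt3Aux.exp_eq]
  set R : ℝ := ∑ θ : ZMod N, Complex.normSq (G θ) * Complex.normSq (G (-θ)) with hRdef
  have hR0 : 0 ≤ R :=
    Finset.sum_nonneg fun θ _ => mul_nonneg (Complex.normSq_nonneg _) (Complex.normSq_nonneg _)
  have hptR : ∀ θ : ZMod N,
      (starRingEnd ℂ) (G θ) * (starRingEnd ℂ) (G (-θ)) * G θ * G (-θ) =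
        ((Complex.normSq (G θ) * Complex.normSq (G (-θ)) : ℝ) : ℂ) := by
    intro θ
    push_cast
    rw [← Complex.mul_conj, ← Complex.mul_conj]
    ring
  have hSum : (((N : ℂ) ^ 3)⁻¹ *
      ∑ x ∈ Finset.univ.filter
          (fun x : ZMod N × ZMod N × ZMod N × ZMod N => x.1 + x.2.2.2 = x.2.1 + x.2.2.1),
        f x.1 * f x.2.1 * (starRingEnd ℂ) (f x.2.2.1) * (starRingEnd ℂ) (f x.2.2.2)) =
      ((((N : ℝ) ^ 4)⁻¹ * R : ℝ) : ℂ) := by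
    rw [Stmt3Aux.claim1 f, Finset.sum_congr rfl fun θ _ => hptR θ, hRdef]
    push_cast
    field_simp
  rw [hSum, Complex.norm_real, Real.norm_eq_abs,
    _root_.abs_of_nonneg (mul_nonneg (inv_nonneg.mpr (by positivity)) hR0)] at hU
  -- maximize |G θ|
  obtain ⟨θ₀, -, hmax⟩ := Finset.exists_max_image Finset.univ
    (fun θ => ‖G θ‖) ⟨0, Finset.mem_univ 0⟩
  set M : ℝ := ‖G θ₀‖ with hMdef
  have hM0 : 0 ≤ M := norm_nonneg _
  have hRb : R ≤ M ^ 2 * ∑ θ : ZMod N, Complex.normSq (G θ) := by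
    rw [Finset.mul_sum, hRdef]
    refine Finset.sum_le_sum fun θ _ => ?_
    have h1 : Complex.normSq (G (-θ)) ≤ M ^ 2 := by
      rw [Complex.normSq_eq_norm_sq]
      exact pow_le_pow_left₀ (norm_nonneg _) (hmax (-θ) (Finset.mem_univ _)) 2
    calc Complex.normSq (G θ) * Complex.normSq (G (-θ))
        ≤ Complex.normSq (G θ) * M ^ 2 :=
          mul_le_mul_of_nonneg_left h1 (Complex.normSq_nonneg _)
      _ = M ^ 2 * Complex.normSq (G θ) := mul_comm _ _
  -- Parseval
  have hP : ∑ θ : ZMod N, Complex.normSq (G θ) = (N : ℝ) * ∑ n : ZMod N, Complex.normSq (f n) := by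
    have h := Stmt3Aux.parseval f
    have hL : ∑ θ : ZMod N, Stmt3Aux.g f θ * (starRingEnd ℂ) (Stmt3Aux.g f θ) =
        ((∑ θ : ZMod N, Complex.normSq (G θ) : ℝ) : ℂ) := by
      push_cast
      exact Finset.sum_congr rfl fun θ _ => Complex.mul_conj _
    have hRr : (N : ℂ) * ∑ n : ZMod N, f n * (starRingEnd ℂ) (f n) =
        (((N : ℝ) * ∑ n : ZMod N, Complex.normSq (f n) : ℝ) : ℂ) := by
      push_cast
      rw [Finset.sum_congr rfl fun n _ => Complex.mul_conj (f n)]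
    exact_mod_cast hL.symm.trans (h.trans hRr)
  have hfn : ∑ n : ZMod N, Complex.normSq (f n) ≤ (N : ℝ) := by
    calc ∑ n : ZMod N, Complex.normSq (f n) ≤ ∑ _n : ZMod N, (1 : ℝ) := by
          refine Finset.sum_le_sum fun n _ => ?_
          rw [Complex.normSq_eq_norm_sq]
          nlinarith [hf n, norm_nonneg (f n)]
      _ = (N : ℝ) := by simp [ZMod.card]
  have hGP : ∑ θ : ZMod N, Complex.normSq (G θ) ≤ (N : ℝ) ^ 2 := by
    rw [hP]
    nlinarith
  have hfinal : (δ ^ 2) ^ 2 ≤ ((N : ℝ)⁻¹ * M) ^ 2 := by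
    have h1 : R ≤ M ^ 2 * (N : ℝ) ^ 2 :=
      hRb.trans (mul_le_mul_of_nonneg_left hGP (sq_nonneg M))
    have h2 : ((N : ℝ) ^ 4)⁻¹ * R ≤ ((N : ℝ)⁻¹ * M) ^ 2 := by
      rw [show ((N : ℝ)⁻¹ * M) ^ 2 = ((N : ℝ) ^ 4)⁻¹ * (M ^ 2 * (N : ℝ) ^ 2) by
        field_simp]
      exact mul_le_mul_of_nonneg_left h1 (inv_nonneg.mpr (by positivity))
    calc (δ ^ 2) ^ 2 = δ ^ 4 := by ring
      _ ≤ ((N : ℝ) ^ 4)⁻¹ * R := hU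
      _ ≤ ((N : ℝ)⁻¹ * M) ^ 2 := h2
  refine ⟨θ₀, ?_⟩
  have habsF : ‖F θ₀‖ = (N : ℝ)⁻¹ * M := by
    rw [hFg θ₀, norm_mul, norm_inv, Complex.norm_natCast]
  rw [habsF]
  exact le_of_pow_le_pow_left₀ two_ne_zero (by positivity) hfinal
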